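/- Let θ : ℂ⁴ → ℂ⁴ be a linear involution (θ² = id) with ω(θx, θy) = −ω(x, y) for all x, y and with θγ = γ⁻¹θ. Then each of the three maps θ, γθ, γ²θ is a linear involution satisfying ω(s·x, s·y) = −ω(x, y), their fixed subspaces F₀ = Fix(θ), F₁ = Fix(γθ), F₂ = Fix(γ²θ) are 2-dimensional totally isotropic (Lagrangian) subspaces of (ℂ⁴, ω), these three subspaces pairwise intersect in {0}, and γ permutes them cyclically and transitively: γ(F₀) = F₂, γ(F₂) = F₁, γ(F₁) = F₀. -/

import Mathlib

open Matrix

/-- The symplectic form on `ℂ⁴` with `ω(e₁,e₃) = ω(e₂,e₄) = 1` and the other listed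
pairings zero. -/
noncomputable def omega4 (x y : Fin 4 → ℂ) : ℂ :=
  x 0 * y 2 - x 2 * y 0 + x 1 * y 3 - x 3 * y 1

/-- The linear map `γ = diag(ζ, ζ, ζ⁻¹, ζ⁻¹)` on `ℂ⁴`. -/
noncomputable def Gam (ζ : ℂ) : (Fin 4 → ℂ) →ₗ[ℂ] (Fin 4 → ℂ) :=
  Matrix.mulVecLin (Matrix.diagonal ![ζ, ζ, ζ⁻¹, ζ⁻¹])

/-- Componentwise description of `Gam`. -/
lemma gam_comp (c : ℂ) (x : Fin 4 → ℂ) (i : Fin 4) :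
    Gam c x i = ![c, c, c⁻¹, c⁻¹] i * x i := by
  simp [Gam, Matrix.mulVecLin_apply, Matrix.mulVec_diagonal]

/-- Embedding of `ℂ²` into the first two coordinates of `ℂ⁴`. -/
noncomputable def Emap : (Fin 2 → ℂ) →ₗ[ℂ] (Fin 4 → ℂ) where
  toFun u := ![u 0, u 1, 0, 0]
  map_add' u v := by funext i; fin_cases i <;> simp
  map_smul' c u := by funext i; fin_cases i <;> simp

/-- An involution of `ℂ⁴` that interchanges the two coordinate planes has a
2-dimensional fixed space. -/
lemma fix_rank (S : (Fin 4 → ℂ) →ₗ[ℂ] (Fin 4 → ℂ))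
    (hS2 : ∀ x, S (S x) = x)
    (hb1 : ∀ x : Fin 4 → ℂ, x 2 = 0 → x 3 = 0 → (S x) 0 = 0 ∧ (S x) 1 = 0)
    (hb2 : ∀ x : Fin 4 → ℂ, x 0 = 0 → x 1 = 0 → (S x) 2 = 0 ∧ (S x) 3 = 0) :
    Module.finrank ℂ (LinearMap.ker (S - LinearMap.id)) = 2 := by
  set T : (Fin 2 → ℂ) →ₗ[ℂ] (Fin 4 → ℂ) := Emap + S ∘ₗ Emap with hT
  have hTapp : ∀ u, T u = Emap u + S (Emap u) := fun u => rfl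
  have hE2 : ∀ u : Fin 2 → ℂ, (Emap u) 2 = 0 := fun u => rfl
  have hE3 : ∀ u : Fin 2 → ℂ, (Emap u) 3 = 0 := fun u => rfl
  have hE0 : ∀ u : Fin 2 → ℂ, (Emap u) 0 = u 0 := fun u => rfl
  have hE1 : ∀ u : Fin 2 → ℂ, (Emap u) 1 = u 1 := fun u => rfl
  have hT0 : ∀ u, T u 0 = u 0 := by
    intro u
    have h := (hb1 (Emap u) (hE2 u) (hE3 u)).1
    show (Emap u + S (Emap u)) 0 = u 0
    simp [Pi.add_apply, h, hE0]
  have hT1 : ∀ u, T u 1 = u 1 := by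
    intro u
    have h := (hb1 (Emap u) (hE2 u) (hE3 u)).2
    show (Emap u + S (Emap u)) 1 = u 1
    simp [Pi.add_apply, h, hE1]
  have hmem : ∀ u, T u ∈ LinearMap.ker (S - LinearMap.id) := by
    intro u
    rw [LinearMap.mem_ker, LinearMap.sub_apply, LinearMap.id_apply, sub_eq_zero, hTapp,
      map_add, hS2, add_comm]
  set f := T.codRestrict (LinearMap.ker (S - LinearMap.id)) hmem with hf
  have hinj : Function.Injective f := by
    intro u v huv
    have h : T u = T v := congrArg Subtype.val huv
    funext i
    fin_cases i
    · show u 0 = v 0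
      rw [← hT0 u, ← hT0 v, h]
    · show u 1 = v 1
      rw [← hT1 u, ← hT1 v, h]
  have hsurj : Function.Surjective f := by
    rintro ⟨y, hy⟩
    rw [LinearMap.mem_ker, LinearMap.sub_apply, LinearMap.id_apply, sub_eq_zero] at hy
    refine ⟨![y 0, y 1], Subtype.ext ?_⟩
    show T ![y 0, y 1] = y
    set u : Fin 2 → ℂ := ![y 0, y 1] with hu
    have hz0 : (y - Emap u) 0 = 0 := by simp [Pi.sub_apply, hE0, hu]
    have hz1 : (y - Emap u) 1 = 0 := by simp [Pi.sub_apply, hE1, hu]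
    have hz := hb2 (y - Emap u) hz0 hz1
    have hsub : S (y - Emap u) = S y - S (Emap u) := map_sub S _ _
    have h2 : S (Emap u) 2 = y 2 := by
      have := congrFun hsub 2
      rw [hz.1, hy] at this
      have h' : y 2 - S (Emap u) 2 = (0:ℂ) := by simpa [Pi.sub_apply] using this.symm
      linear_combination -h'
    have h3 : S (Emap u) 3 = y 3 := by
      have := congrFun hsub 3
      rw [hz.2, hy] at this
      have h' : y 3 - S (Emap u) 3 = (0:ℂ) := by simpa [Pi.sub_apply] using this.symm
      linear_combination -h'
    funext i
    rw [hTapp]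
    fin_cases i
    · show (Emap u + S (Emap u)) 0 = y 0
      have := (hb1 (Emap u) (hE2 u) (hE3 u)).1
      rw [Pi.add_apply, this, hE0]; simp [hu]
    · show (Emap u + S (Emap u)) 1 = y 1
      have := (hb1 (Emap u) (hE2 u) (hE3 u)).2
      rw [Pi.add_apply, this, hE1]; simp [hu]
    · show (Emap u + S (Emap u)) 2 = y 2
      simp [Pi.add_apply, hE2, h2]
    · show (Emap u + S (Emap u)) 3 = y 3
      simp [Pi.add_apply, hE3, h3]
  have e := LinearEquiv.ofBijective f ⟨hinj, hsurj⟩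
  rw [← e.finrank_eq]
  simp

/-- For `ζ` a primitive cube root of unity and `θ` an anti-symplectic linear involution
of `(ℂ⁴, ω)` with `θγ = γ⁻¹θ`: the maps `θ, γθ, γ²θ` are anti-symplectic involutions,
their fixed subspaces are 2-dimensional totally isotropic (Lagrangian) subspaces with
pairwise zero intersection, and `γ` permutes them cyclically:
`γ(F₀) = F₂`, `γ(F₂) = F₁`, `γ(F₁) = F₀`. -/
theorem stmt_15 (ζ : ℂ) (hζ3 : ζ ^ 3 = 1) (hζ1 : ζ ≠ 1)
    (θ : (Fin 4 → ℂ) →ₗ[ℂ] (Fin 4 → ℂ))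
    (hθ2 : θ ∘ₗ θ = LinearMap.id)
    (hθanti : ∀ x y : Fin 4 → ℂ, omega4 (θ x) (θ y) = -omega4 x y)
    (hθΓ : θ ∘ₗ Gam ζ = Gam ζ⁻¹ ∘ₗ θ) :
    ((Gam ζ ∘ₗ θ) ∘ₗ (Gam ζ ∘ₗ θ) = LinearMap.id) ∧
    ((Gam ζ ∘ₗ (Gam ζ ∘ₗ θ)) ∘ₗ (Gam ζ ∘ₗ (Gam ζ ∘ₗ θ)) = LinearMap.id) ∧
    (∀ x y : Fin 4 → ℂ, omega4 ((Gam ζ ∘ₗ θ) x) ((Gam ζ ∘ₗ θ) y) = -omega4 x y) ∧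
    (∀ x y : Fin 4 → ℂ,
      omega4 ((Gam ζ ∘ₗ (Gam ζ ∘ₗ θ)) x) ((Gam ζ ∘ₗ (Gam ζ ∘ₗ θ)) y) = -omega4 x y) ∧
    (∀ x ∈ LinearMap.ker (θ - LinearMap.id),
      ∀ y ∈ LinearMap.ker (θ - LinearMap.id), omega4 x y = 0) ∧
    (∀ x ∈ LinearMap.ker (Gam ζ ∘ₗ θ - LinearMap.id),
      ∀ y ∈ LinearMap.ker (Gam ζ ∘ₗ θ - LinearMap.id), omega4 x y = 0) ∧
    (∀ x ∈ LinearMap.ker (Gam ζ ∘ₗ (Gam ζ ∘ₗ θ) - LinearMap.id),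
      ∀ y ∈ LinearMap.ker (Gam ζ ∘ₗ (Gam ζ ∘ₗ θ) - LinearMap.id), omega4 x y = 0) ∧
    Module.finrank ℂ (LinearMap.ker (θ - LinearMap.id)) = 2 ∧
    Module.finrank ℂ (LinearMap.ker (Gam ζ ∘ₗ θ - LinearMap.id)) = 2 ∧
    Module.finrank ℂ (LinearMap.ker (Gam ζ ∘ₗ (Gam ζ ∘ₗ θ) - LinearMap.id)) = 2 ∧
    (LinearMap.ker (θ - LinearMap.id) ⊓
      LinearMap.ker (Gam ζ ∘ₗ θ - LinearMap.id) = ⊥) ∧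
    (LinearMap.ker (θ - LinearMap.id) ⊓
      LinearMap.ker (Gam ζ ∘ₗ (Gam ζ ∘ₗ θ) - LinearMap.id) = ⊥) ∧
    (LinearMap.ker (Gam ζ ∘ₗ θ - LinearMap.id) ⊓
      LinearMap.ker (Gam ζ ∘ₗ (Gam ζ ∘ₗ θ) - LinearMap.id) = ⊥) ∧
    Submodule.map (Gam ζ) (LinearMap.ker (θ - LinearMap.id)) =
      LinearMap.ker (Gam ζ ∘ₗ (Gam ζ ∘ₗ θ) - LinearMap.id) ∧
    Submodule.map (Gam ζ) (LinearMap.ker (Gam ζ ∘ₗ (Gam ζ ∘ₗ θ) - LinearMap.id)) =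
      LinearMap.ker (Gam ζ ∘ₗ θ - LinearMap.id) ∧
    Submodule.map (Gam ζ) (LinearMap.ker (Gam ζ ∘ₗ θ - LinearMap.id)) =
      LinearMap.ker (θ - LinearMap.id) := by
  -- scalar facts
  have hζ0 : ζ ≠ 0 := by
    intro h; rw [h] at hζ3; norm_num at hζ3
  have hζζ : ζ * ζ⁻¹ = 1 := mul_inv_cancel₀ hζ0
  have hinv : ζ⁻¹ = ζ ^ 2 := by
    have h : ζ * ζ ^ 2 = 1 := by linear_combination hζ3
    exact inv_eq_of_mul_eq_one_right h
  have hζ2 : ζ ^ 2 ≠ 1 := by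
    intro h
    have h' := hζ3
    rw [pow_succ, h, one_mul] at h'
    exact hζ1 h'
  have hinv1 : ζ⁻¹ ≠ 1 := by rw [hinv]; exact hζ2
  -- componentwise description of Gam ζ and Gam ζ⁻¹
  have hG0 : ∀ x : Fin 4 → ℂ, Gam ζ x 0 = ζ * x 0 := fun x => by simp [gam_comp]
  have hG1 : ∀ x : Fin 4 → ℂ, Gam ζ x 1 = ζ * x 1 := fun x => by simp [gam_comp]
  have hG2 : ∀ x : Fin 4 → ℂ, Gam ζ x 2 = ζ⁻¹ * x 2 := fun x => by simp [gam_comp]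
  have hG3c : ∀ x : Fin 4 → ℂ, Gam ζ x 3 = ζ⁻¹ * x 3 := fun x => by simp [gam_comp]
  have hG'0 : ∀ x : Fin 4 → ℂ, Gam ζ⁻¹ x 0 = ζ⁻¹ * x 0 := fun x => by simp [gam_comp]
  have hG'1 : ∀ x : Fin 4 → ℂ, Gam ζ⁻¹ x 1 = ζ⁻¹ * x 1 := fun x => by simp [gam_comp]
  have hG'2 : ∀ x : Fin 4 → ℂ, Gam ζ⁻¹ x 2 = ζ * x 2 := fun x => by simp [gam_comp]
  have hG'3 : ∀ x : Fin 4 → ℂ, Gam ζ⁻¹ x 3 = ζ * x 3 := fun x => by simp [gam_comp]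
  -- pointwise forms of the hypotheses
  have hθ2' : ∀ x, θ (θ x) = x := fun x => by
    simpa using LinearMap.congr_fun hθ2 x
  have hθG : ∀ x, θ (Gam ζ x) = Gam ζ⁻¹ (θ x) := fun x => by
    simpa using LinearMap.congr_fun hθΓ x
  have hext : ∀ f g : Fin 4 → ℂ, f 0 = g 0 → f 1 = g 1 → f 2 = g 2 → f 3 = g 3 → f = g := by
    intro f g h0 h1 h2 h3
    funext i
    fin_cases i <;> assumption
  -- vector identities for Gam
  have hGG : ∀ x, Gam ζ (Gam ζ x) = Gam ζ⁻¹ x := by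
    intro x
    refine hext _ _ ?_ ?_ ?_ ?_
    · rw [hG0, hG0, hG'0, hinv]; ring
    · rw [hG1, hG1, hG'1, hinv]; ring
    · rw [hG2, hG2, hG'2, hinv]; linear_combination (x 2 * ζ) * hζ3
    · rw [hG3c, hG3c, hG'3, hinv]; linear_combination (x 3 * ζ) * hζ3
  have hGinv : ∀ x, Gam ζ (Gam ζ⁻¹ x) = x := by
    intro x
    refine hext _ _ ?_ ?_ ?_ ?_
    · rw [hG0, hG'0]; linear_combination x 0 * hζζ
    · rw [hG1, hG'1]; linear_combination x 1 * hζζ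
    · rw [hG2, hG'2]; linear_combination x 2 * hζζ
    · rw [hG3c, hG'3]; linear_combination x 3 * hζζ
  have hGinv' : ∀ x, Gam ζ⁻¹ (Gam ζ x) = x := by
    intro x
    refine hext _ _ ?_ ?_ ?_ ?_
    · rw [hG'0, hG0]; linear_combination x 0 * hζζ
    · rw [hG'1, hG1]; linear_combination x 1 * hζζ
    · rw [hG'2, hG2]; linear_combination x 2 * hζζ
    · rw [hG'3, hG3c]; linear_combination x 3 * hζζ
  have hG3 : ∀ x, Gam ζ (Gam ζ (Gam ζ x)) = x := fun x => by rw [hGG, hGinv']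
  have hGθ : ∀ x, Gam ζ (θ x) = θ (Gam ζ⁻¹ x) := by
    intro x
    have h := hθG (Gam ζ⁻¹ x)
    rw [hGinv] at h
    rw [h, hGinv]
  -- the two involutions
  have hA2 : ∀ x, Gam ζ (θ (Gam ζ (θ x))) = x := fun x => by
    rw [hθG (θ x), hθ2', hGinv]
  have hB2 : ∀ x, Gam ζ (Gam ζ (θ (Gam ζ (Gam ζ (θ x))))) = x := fun x => by
    rw [hGG (θ x), ← hGθ (θ x), hθ2', hG3]
  -- symplectic behaviour
  have hωG : ∀ x y, omega4 (Gam ζ x) (Gam ζ y) = omega4 x y := by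
    intro x y
    simp only [omega4, hG0, hG1, hG2, hG3c]
    linear_combination (x 0 * y 2 - x 2 * y 0 + x 1 * y 3 - x 3 * y 1) * hζζ
  have hωA : ∀ x y, omega4 (Gam ζ (θ x)) (Gam ζ (θ y)) = -omega4 x y := fun x y => by
    rw [hωG, hθanti]
  have hωB : ∀ x y, omega4 (Gam ζ (Gam ζ (θ x))) (Gam ζ (Gam ζ (θ y))) = -omega4 x y :=
    fun x y => by rw [hωG, hωG, hθanti]
  -- kernel membership
  have hker : ∀ (S : (Fin 4 → ℂ) →ₗ[ℂ] (Fin 4 → ℂ)) (x : Fin 4 → ℂ),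
      x ∈ LinearMap.ker (S - LinearMap.id) ↔ S x = x := by
    intro S x
    rw [LinearMap.mem_ker, LinearMap.sub_apply, LinearMap.id_apply, sub_eq_zero]
  -- isotropy of fixed spaces
  have iso : ∀ (S : (Fin 4 → ℂ) →ₗ[ℂ] (Fin 4 → ℂ)),
      (∀ x y, omega4 (S x) (S y) = -omega4 x y) →
      ∀ x ∈ LinearMap.ker (S - LinearMap.id), ∀ y ∈ LinearMap.ker (S - LinearMap.id),
        omega4 x y = 0 := by
    intro S hS x hx y hy
    rw [hker] at hx hy
    have h := hS x y
    rw [hx, hy] at h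
    linear_combination h / 2
  -- cancellation lemmas
  have key : ∀ a : ℂ, ζ * a = ζ⁻¹ * a → a = 0 := by
    intro a h
    have h2 : (ζ - ζ⁻¹) * a = 0 := by linear_combination h
    rcases mul_eq_zero.mp h2 with h3 | h3
    · exfalso
      apply hζ2
      have h4 : ζ = ζ⁻¹ := by linear_combination h3
      rw [sq]
      nth_rewrite 2 [h4]
      exact hζζ
    · exact h3
  have key1 : ∀ a : ℂ, ζ * a = a → a = 0 := by
    intro a h
    have h2 : (ζ - 1) * a = 0 := by linear_combination h
    rcases mul_eq_zero.mp h2 with h3 | h3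
    · exact absurd (by linear_combination h3) hζ1
    · exact h3
  have key1' : ∀ a : ℂ, ζ⁻¹ * a = a → a = 0 := by
    intro a h
    have h2 : (ζ⁻¹ - 1) * a = 0 := by linear_combination h
    rcases mul_eq_zero.mp h2 with h3 | h3
    · exact absurd (by linear_combination h3) hinv1
    · exact h3
  -- Gam has no nonzero fixed vectors
  have hfixγ : ∀ x : Fin 4 → ℂ, Gam ζ x = x → x = 0 := by
    intro x h
    have h0 : x 0 = 0 := by have := congrFun h 0; rw [hG0] at this; exact key1 _ this
    have h1 : x 1 = 0 := by have := congrFun h 1; rw [hG1] at this; exact key1 _ this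
    have h2 : x 2 = 0 := by have := congrFun h 2; rw [hG2] at this; exact key1' _ this
    have h3 : x 3 = 0 := by have := congrFun h 3; rw [hG3c] at this; exact key1' _ this
    refine hext _ _ ?_ ?_ ?_ ?_ <;> simpa [h0, h1, h2, h3]
  have hfixγ' : ∀ x : Fin 4 → ℂ, Gam ζ⁻¹ x = x → x = 0 := by
    intro x h
    have h0 : x 0 = 0 := by have := congrFun h 0; rw [hG'0] at this; exact key1' _ this
    have h1 : x 1 = 0 := by have := congrFun h 1; rw [hG'1] at this; exact key1' _ this
    have h2 : x 2 = 0 := by have := congrFun h 2; rw [hG'2] at this; exact key1 _ this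
    have h3 : x 3 = 0 := by have := congrFun h 3; rw [hG'3] at this; exact key1 _ this
    refine hext _ _ ?_ ?_ ?_ ?_ <;> simpa [h0, h1, h2, h3]
  -- block conditions
  have hbθ1 : ∀ x : Fin 4 → ℂ, x 2 = 0 → x 3 = 0 → θ x 0 = 0 ∧ θ x 1 = 0 := by
    intro x h2 h3
    have hx : Gam ζ x = ζ • x := by
      refine hext _ _ ?_ ?_ ?_ ?_
      · rw [hG0]; simp
      · rw [hG1]; simp
      · rw [hG2]; show ζ⁻¹ * x 2 = (ζ • x) 2; rw [Pi.smul_apply, smul_eq_mul, h2]; ring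
      · rw [hG3c]; show ζ⁻¹ * x 3 = (ζ • x) 3; rw [Pi.smul_apply, smul_eq_mul, h3]; ring
    have h := hθG x
    rw [hx, LinearMap.map_smul] at h
    constructor
    · have h0 := congrFun h 0
      rw [hG'0] at h0
      simp only [Pi.smul_apply, smul_eq_mul] at h0
      exact key _ h0
    · have h1 := congrFun h 1
      rw [hG'1] at h1
      simp only [Pi.smul_apply, smul_eq_mul] at h1
      exact key _ h1
  have hbθ2 : ∀ x : Fin 4 → ℂ, x 0 = 0 → x 1 = 0 → θ x 2 = 0 ∧ θ x 3 = 0 := by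
    intro x h0 h1
    have hx : Gam ζ x = ζ⁻¹ • x := by
      refine hext _ _ ?_ ?_ ?_ ?_
      · rw [hG0]; show ζ * x 0 = (ζ⁻¹ • x) 0; rw [Pi.smul_apply, smul_eq_mul, h0]; ring
      · rw [hG1]; show ζ * x 1 = (ζ⁻¹ • x) 1; rw [Pi.smul_apply, smul_eq_mul, h1]; ring
      · rw [hG2]; simp
      · rw [hG3c]; simp
    have h := hθG x
    rw [hx, LinearMap.map_smul] at h
    constructor
    · have h2 := congrFun h 2
      rw [hG'2] at h2
      simp only [Pi.smul_apply, smul_eq_mul] at h2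
      exact key _ h2.symm
    · have h3 := congrFun h 3
      rw [hG'3] at h3
      simp only [Pi.smul_apply, smul_eq_mul] at h3
      exact key _ h3.symm
  have hbA1 : ∀ x : Fin 4 → ℂ, x 2 = 0 → x 3 = 0 →
      Gam ζ (θ x) 0 = 0 ∧ Gam ζ (θ x) 1 = 0 := by
    intro x h2 h3
    obtain ⟨u0, u1⟩ := hbθ1 x h2 h3
    exact ⟨by rw [hG0, u0, mul_zero], by rw [hG1, u1, mul_zero]⟩
  have hbA2 : ∀ x : Fin 4 → ℂ, x 0 = 0 → x 1 = 0 →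
      Gam ζ (θ x) 2 = 0 ∧ Gam ζ (θ x) 3 = 0 := by
    intro x h0 h1
    obtain ⟨u2, u3⟩ := hbθ2 x h0 h1
    exact ⟨by rw [hG2, u2, mul_zero], by rw [hG3c, u3, mul_zero]⟩
  have hbB1 : ∀ x : Fin 4 → ℂ, x 2 = 0 → x 3 = 0 →
      Gam ζ (Gam ζ (θ x)) 0 = 0 ∧ Gam ζ (Gam ζ (θ x)) 1 = 0 := by
    intro x h2 h3
    obtain ⟨u0, u1⟩ := hbA1 x h2 h3
    exact ⟨by rw [hG0, u0, mul_zero], by rw [hG1, u1, mul_zero]⟩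
  have hbB2 : ∀ x : Fin 4 → ℂ, x 0 = 0 → x 1 = 0 →
      Gam ζ (Gam ζ (θ x)) 2 = 0 ∧ Gam ζ (Gam ζ (θ x)) 3 = 0 := by
    intro x h0 h1
    obtain ⟨u2, u3⟩ := hbA2 x h0 h1
    exact ⟨by rw [hG2, u2, mul_zero], by rw [hG3c, u3, mul_zero]⟩
  -- the sixteen statements
  refine ⟨?_, ?_, ?_, ?_, ?_, ?_, ?_, ?_, ?_, ?_, ?_, ?_, ?_, ?_, ?_, ?_⟩
  · exact LinearMap.ext fun x => by
      simp only [LinearMap.comp_apply, LinearMap.id_apply]; exact hA2 x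
  · exact LinearMap.ext fun x => by
      simp only [LinearMap.comp_apply, LinearMap.id_apply]; exact hB2 x
  · intro x y; simp only [LinearMap.comp_apply]; exact hωA x y
  · intro x y; simp only [LinearMap.comp_apply]; exact hωB x y
  · exact iso θ hθanti
  · exact iso (Gam ζ ∘ₗ θ) fun x y => by
      simp only [LinearMap.comp_apply]; exact hωA x y
  · exact iso (Gam ζ ∘ₗ (Gam ζ ∘ₗ θ)) fun x y => by
      simp only [LinearMap.comp_apply]; exact hωB x y
  · exact fix_rank θ hθ2' hbθ1 hbθ2
  · exact fix_rank (Gam ζ ∘ₗ θ)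
      (fun x => by simp only [LinearMap.comp_apply]; exact hA2 x)
      (fun x h2 h3 => by simp only [LinearMap.comp_apply]; exact hbA1 x h2 h3)
      (fun x h0 h1 => by simp only [LinearMap.comp_apply]; exact hbA2 x h0 h1)
  · exact fix_rank (Gam ζ ∘ₗ (Gam ζ ∘ₗ θ))
      (fun x => by simp only [LinearMap.comp_apply]; exact hB2 x)
      (fun x h2 h3 => by simp only [LinearMap.comp_apply]; exact hbB1 x h2 h3)
      (fun x h0 h1 => by simp only [LinearMap.comp_apply]; exact hbB2 x h0 h1)
  · rw [eq_bot_iff]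
    intro x hx
    rw [Submodule.mem_inf, hker, hker] at hx
    obtain ⟨hx1, hx2⟩ := hx
    simp only [LinearMap.comp_apply] at hx2
    rw [hx1] at hx2
    simpa using hfixγ x hx2
  · rw [eq_bot_iff]
    intro x hx
    rw [Submodule.mem_inf, hker, hker] at hx
    obtain ⟨hx1, hx2⟩ := hx
    simp only [LinearMap.comp_apply] at hx2
    rw [hx1, hGG] at hx2
    simpa using hfixγ' x hx2
  · rw [eq_bot_iff]
    intro x hx
    rw [Submodule.mem_inf, hker, hker] at hx
    obtain ⟨hx1, hx2⟩ := hx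
    simp only [LinearMap.comp_apply] at hx1 hx2
    rw [hx1] at hx2
    simpa using hfixγ x hx2
  · ext y
    simp only [Submodule.mem_map, hker, LinearMap.comp_apply]
    constructor
    · rintro ⟨x, hx, rfl⟩
      rw [hθG, hx, hGinv]
    · intro hy
      have h1 : θ y = Gam ζ y := by
        have := congrArg (Gam ζ) hy
        rwa [hG3] at this
      refine ⟨Gam ζ (Gam ζ y), ?_, hG3 y⟩
      rw [hGG y, ← hGθ y, h1]
      exact hGG y
  · ext y
    simp only [Submodule.mem_map, hker, LinearMap.comp_apply]
    constructor
    · rintro ⟨x, hx, rfl⟩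
      rw [hθG, hGinv]
      have := congrArg (Gam ζ) hx
      rwa [hG3] at this
    · intro hy
      refine ⟨Gam ζ (Gam ζ y), ?_, hG3 y⟩
      rw [hGG y, ← hGθ y, hy]
      exact hGG y
  · ext y
    simp only [Submodule.mem_map, hker, LinearMap.comp_apply]
    constructor
    · rintro ⟨x, hx, rfl⟩
      have h1 : θ x = Gam ζ (Gam ζ x) := by
        have := congrArg (Gam ζ) (congrArg (Gam ζ) hx)
        rwa [hG3] at this
      rw [hθG, h1, hGinv']
    · intro hy
      refine ⟨Gam ζ (Gam ζ y), ?_, hG3 y⟩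
      rw [hGG y, ← hGθ y, hy]
      exact hGG y
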